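/- arXiv:1910.13211 — 6 statements merged into one kernel-verified Lean document; each statement's English description precedes it below -/
import Mathlib

section
/- Let n* ∈ (0,1) and 0 < ε < 1/2. The regularized convex potential ψ₊,ε : ℝ → ℝ is twice continuously differentiable on ℝ, with ψ₊,ε''(n) = ψ₊''(ε) for n ≤ ε, ψ₊,ε''(n) = ψ₊''(n) for ε ≤ n ≤ 1 − ε, and ψ₊,ε''(n) = ψ₊''(1 − ε) for n ≥ 1 − ε. Moreover, if n* ≤ 1 − (2/3)³, then ψ₊,ε is convex on all of ℝ. -/
/-- The convex part of the single-well potential: `ψ₊(n) = −(1−n*)·log(1−n) − n³/3`. -/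
noncomputable def psiPlus (ns n : ℝ) : ℝ :=
  -(1 - ns) * Real.log (1 - n) - n ^ 3 / 3

/-- Its derivative `ψ₊'(n) = (1−n*)/(1−n) − n²`. -/
noncomputable def psiPlusD (ns n : ℝ) : ℝ := (1 - ns) / (1 - n) - n ^ 2

/-- Its second derivative `ψ₊''(n) = (1−n*)/(1−n)² − 2n`. -/
noncomputable def psiPlusDD (ns n : ℝ) : ℝ := (1 - ns) / (1 - n) ^ 2 - 2 * n

/-- The regularized convex potential `ψ₊,ε : ℝ → ℝ`, obtained by freezing the second
derivative of `ψ₊` outside `[ε, 1−ε]` (second-order Taylor extensions at `ε` and `1−ε`). -/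
noncomputable def psiPlusEps (ns ε n : ℝ) : ℝ :=
  if n ≤ ε then
    psiPlus ns ε + psiPlusD ns ε * (n - ε) + (1 / 2) * psiPlusDD ns ε * (n - ε) ^ 2
  else if n ≤ 1 - ε then psiPlus ns n
  else
    psiPlus ns (1 - ε) + psiPlusD ns (1 - ε) * (n - (1 - ε))
      + (1 / 2) * psiPlusDD ns (1 - ε) * (n - (1 - ε)) ^ 2

noncomputable def qf (ns c n : ℝ) : ℝ :=
  psiPlus ns c + psiPlusD ns c * (n - c) + (1 / 2) * psiPlusDD ns c * (n - c) ^ 2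
noncomputable def qd (ns c n : ℝ) : ℝ := psiPlusD ns c + psiPlusDD ns c * (n - c)

lemma hasDerivAt_psiPlus (ns : ℝ) {x : ℝ} (hx : x ≠ 1) :
    HasDerivAt (psiPlus ns) (psiPlusD ns x) x := by
  have hne : 1 - x ≠ 0 := sub_ne_zero.mpr (Ne.symm hx)
  have h1 : HasDerivAt (fun n : ℝ => 1 - n) (-1) x := by
    simpa using (hasDerivAt_id x).const_sub 1
  have hlog : HasDerivAt (fun n : ℝ => Real.log (1 - n)) ((1 - x)⁻¹ * (-1)) x :=
    (Real.hasDerivAt_log hne).comp x h1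
  have h2 : HasDerivAt (fun n : ℝ => n ^ 3 / 3) ((3 * x ^ 2) / 3) x :=
    (hasDerivAt_pow 3 x).div_const 3
  have := (hlog.const_mul (-(1 - ns))).sub h2
  convert this using 1
  · rfl
  · rfl
  · rfl
  unfold psiPlusD
  field_simp

lemma hasDerivAt_psiPlusD (ns : ℝ) {x : ℝ} (hx : x ≠ 1) :
    HasDerivAt (psiPlusD ns) (psiPlusDD ns x) x := by
  have hne : 1 - x ≠ 0 := sub_ne_zero.mpr (Ne.symm hx)
  have h1 : HasDerivAt (fun n : ℝ => 1 - n) (-1) x := by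
    simpa using (hasDerivAt_id x).const_sub 1
  have hdiv : HasDerivAt (fun n : ℝ => (1 - ns) / (1 - n))
      ((0 * (1 - x) - (1 - ns) * (-1)) / (1 - x) ^ 2) x :=
    (hasDerivAt_const x (1 - ns)).div h1 hne
  have h2 : HasDerivAt (fun n : ℝ => n ^ 2) (2 * x) x := by
    simpa using hasDerivAt_pow 2 x
  have := hdiv.sub h2
  convert this using 1
  · rfl
  · rfl
  · rfl
  unfold psiPlusDD
  field_simp
  ring

lemma hasDerivAt_qf (ns c : ℝ) (x : ℝ) : HasDerivAt (qf ns c) (qd ns c x) x := by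
  have hd : HasDerivAt (fun n : ℝ => n - c) 1 x := (hasDerivAt_id x).sub_const c
  have := ((hasDerivAt_const x (psiPlus ns c)).add (hd.const_mul (psiPlusD ns c))).add
    ((hd.pow 2).const_mul (1 / 2 * psiPlusDD ns c))
  convert this using 1
  · rfl
  · rfl
  · rfl
  unfold qd; ring

lemma hasDerivAt_qd (ns c : ℝ) (x : ℝ) : HasDerivAt (qd ns c) (psiPlusDD ns c) x := by
  have hd : HasDerivAt (fun n : ℝ => n - c) 1 x := (hasDerivAt_id x).sub_const c
  have := (hasDerivAt_const x (psiPlusD ns c)).add (hd.const_mul (psiPlusDD ns c))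
  convert this using 1
  · rfl
  · rfl
  · rfl
  ring

lemma glue {f f₁ f₂ : ℝ → ℝ} {a d : ℝ}
    (h1 : ∀ᶠ x in nhdsWithin a (Set.Iic a), f x = f₁ x)
    (h2 : ∀ᶠ x in nhdsWithin a (Set.Ici a), f x = f₂ x)
    (H1 : HasDerivAt f₁ d a) (H2 : HasDerivAt f₂ d a) : HasDerivAt f d a := by
  have hl : HasDerivWithinAt f d (Set.Iic a) a :=
    H1.hasDerivWithinAt.congr_of_eventuallyEq
      (h1.mono fun x hx => hx)
      (h1.self_of_nhdsWithin (Set.mem_Iic.mpr le_rfl))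
  have hr : HasDerivWithinAt f d (Set.Ici a) a :=
    H2.hasDerivWithinAt.congr_of_eventuallyEq
      (h2.mono fun x hx => hx)
      (h2.self_of_nhdsWithin (Set.mem_Ici.mpr le_rfl))
  have := hl.union hr
  rw [Set.Iic_union_Ici] at this
  exact this.hasDerivAt (by simp)

lemma piecewise_hasDerivAt {a b : ℝ} (hab : a < b) {A B C A' B' C' : ℝ → ℝ}
    (hA : ∀ x, HasDerivAt A (A' x) x) (hB : ∀ x ∈ Set.Icc a b, HasDerivAt B (B' x) x)
    (hC : ∀ x, HasDerivAt C (C' x) x)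
    (hVa : A a = B a) (hVb : B b = C b) (hDa : A' a = B' a) (hDb : B' b = C' b) (x : ℝ) :
    HasDerivAt (fun n => if n ≤ a then A n else if n ≤ b then B n else C n)
      (if x ≤ a then A' x else if x ≤ b then B' x else C' x) x := by
  rcases lt_trichotomy x a with h | h | h
  · rw [if_pos h.le]
    exact (hA x).congr_of_eventuallyEq <| Filter.eventuallyEq_of_mem (Iio_mem_nhds h)
      fun y hy => if_pos (le_of_lt hy)
  · subst h
    rw [if_pos le_rfl]
    have h1 : ∀ᶠ y in nhdsWithin x (Set.Iic x),
        (if y ≤ x then A y else if y ≤ b then B y else C y) = A y :=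
      eventually_mem_nhdsWithin.mono fun y hy => if_pos hy
    have h2 : ∀ᶠ y in nhdsWithin x (Set.Ici x),
        (if y ≤ x then A y else if y ≤ b then B y else C y) = B y := by
      have e2 : ∀ᶠ y in nhdsWithin x (Set.Ici x), y < b :=
        Filter.eventually_of_mem (mem_nhdsWithin_of_mem_nhds (Iio_mem_nhds hab)) fun y hy => hy
      filter_upwards [eventually_mem_nhdsWithin, e2] with y hy1 hy2
      by_cases hya : y ≤ x
      · have : y = x := le_antisymm hya hy1
        subst this
        rw [if_pos le_rfl, hVa]
      · rw [if_neg hya, if_pos hy2.le]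
    exact glue h1 h2 (hA x) (hDa ▸ hB x ⟨le_rfl, hab.le⟩)
  · rw [if_neg (not_le.mpr h)]
    rcases lt_trichotomy x b with h' | h' | h'
    · rw [if_pos h'.le]
      exact (hB x ⟨h.le, h'.le⟩).congr_of_eventuallyEq <|
        Filter.eventuallyEq_of_mem (Ioo_mem_nhds h h')
          fun y hy => by rw [if_neg (not_le.mpr hy.1), if_pos hy.2.le]
    · subst h'
      rw [if_pos le_rfl]
      have h1 : ∀ᶠ y in nhdsWithin x (Set.Iic x),
          (if y ≤ a then A y else if y ≤ x then B y else C y) = B y := by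
        have e2 : ∀ᶠ y in nhdsWithin x (Set.Iic x), a < y :=
          Filter.eventually_of_mem (mem_nhdsWithin_of_mem_nhds (Ioi_mem_nhds h)) fun y hy => hy
        filter_upwards [eventually_mem_nhdsWithin, e2] with y hy1 hy2
        rw [if_neg (not_le.mpr hy2), if_pos (show y ≤ x from hy1)]
      have h2 : ∀ᶠ y in nhdsWithin x (Set.Ici x),
          (if y ≤ a then A y else if y ≤ x then B y else C y) = C y := by
        filter_upwards [eventually_mem_nhdsWithin] with y hy1
        rw [if_neg (not_le.mpr (lt_of_lt_of_le h hy1))]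
        by_cases hyb : y ≤ x
        · have : y = x := le_antisymm hyb hy1
          subst this
          rw [if_pos le_rfl, hVb]
        · rw [if_neg hyb]
      exact glue h1 h2 (hB x ⟨h.le, le_rfl⟩) (hDb ▸ hC x)
    · rw [if_neg (not_le.mpr h')]
      exact (hC x).congr_of_eventuallyEq <| Filter.eventuallyEq_of_mem (Ioi_mem_nhds h')
        fun y hy => by rw [if_neg (not_le.mpr (lt_trans hab hy)), if_neg (not_le.mpr hy)]

lemma psiPlusDD_nonneg {ns c : ℝ} (hns : ns ≤ 1 - (2 / 3 : ℝ) ^ 3) (h0 : 0 < c) (h1 : c < 1) :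
    0 ≤ psiPlusDD ns c := by
  unfold psiPlusDD
  rw [sub_nonneg, le_div_iff₀ (pow_pos (by linarith : (0:ℝ) < 1 - c) 2)]
  nlinarith [mul_nonneg (sq_nonneg (3 * c - 1)) (by linarith : (0:ℝ) ≤ 8 - 6 * c)]

theorem stmt4 (ns ε : ℝ) (hns : ns ∈ Set.Ioo (0 : ℝ) 1)
    (hε : 0 < ε) (hε' : ε < 1 / 2) :
    ContDiff ℝ 2 (psiPlusEps ns ε) ∧
    (∀ n : ℝ, n ≤ ε → deriv (deriv (psiPlusEps ns ε)) n = psiPlusDD ns ε) ∧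
    (∀ n ∈ Set.Icc ε (1 - ε), deriv (deriv (psiPlusEps ns ε)) n = psiPlusDD ns n) ∧
    (∀ n : ℝ, 1 - ε ≤ n → deriv (deriv (psiPlusEps ns ε)) n = psiPlusDD ns (1 - ε)) ∧
    (ns ≤ 1 - (2 / 3 : ℝ) ^ 3 → ConvexOn ℝ Set.univ (psiPlusEps ns ε)) := by
  have hab : ε < 1 - ε := by linarith
  have hb1 : (1 : ℝ) - ε ≠ 1 := by intro h; linarith [sub_eq_self.mp h]
  have hF : psiPlusEps ns ε = fun n =>
      if n ≤ ε then qf ns ε n else if n ≤ 1 - ε then psiPlus ns n else qf ns (1 - ε) n := rfl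
  have Hf : ∀ x, HasDerivAt (psiPlusEps ns ε)
      (if x ≤ ε then qd ns ε x else if x ≤ 1 - ε then psiPlusD ns x else qd ns (1 - ε) x) x := by
    rw [hF]
    refine piecewise_hasDerivAt hab (hasDerivAt_qf ns ε)
      (fun x hx => hasDerivAt_psiPlus ns (by intro h; rw [h] at hx; linarith [hx.2]))
      (hasDerivAt_qf ns (1 - ε)) ?_ ?_ ?_ ?_
    · simp [qf]
    · simp [qf]
    · simp [qd]
    · simp [qd]
  set g : ℝ → ℝ := fun x =>
    if x ≤ ε then qd ns ε x else if x ≤ 1 - ε then psiPlusD ns x else qd ns (1 - ε) x with hg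
  have Hg : ∀ x, HasDerivAt g
      (if x ≤ ε then psiPlusDD ns ε else if x ≤ 1 - ε then psiPlusDD ns x
        else psiPlusDD ns (1 - ε)) x := by
    refine piecewise_hasDerivAt hab (fun x => hasDerivAt_qd ns ε x)
      (fun x hx => hasDerivAt_psiPlusD ns (by intro h; rw [h] at hx; linarith [hx.2]))
      (fun x => hasDerivAt_qd ns (1 - ε) x) ?_ ?_ rfl rfl
    · simp [qd]
    · simp [qd]
  set h : ℝ → ℝ := fun x =>
    if x ≤ ε then psiPlusDD ns ε else if x ≤ 1 - ε then psiPlusDD ns x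
      else psiPlusDD ns (1 - ε) with hh
  have hclamp : ∀ x, h x = psiPlusDD ns (max ε (min x (1 - ε))) := by
    intro x
    simp only [hh]
    rcases le_or_gt x ε with h1 | h1
    · rw [if_pos h1, min_eq_left (h1.trans hab.le), max_eq_left h1]
    · rw [if_neg (not_le.mpr h1)]
      rcases le_or_gt x (1 - ε) with h2 | h2
      · rw [if_pos h2, min_eq_left h2, max_eq_right h1.le]
      · rw [if_neg (not_le.mpr h2), min_eq_right h2.le, max_eq_right hab.le]
  have hcont : Continuous h := by
    have hc : Continuous fun x : ℝ => max ε (min x (1 - ε)) :=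
      continuous_const.max (continuous_id.min continuous_const)
    have : Continuous fun x : ℝ =>
        (1 - ns) / (1 - max ε (min x (1 - ε))) ^ 2 - 2 * max ε (min x (1 - ε)) := by
      refine Continuous.sub (Continuous.div continuous_const (by fun_prop) fun x => ?_)
        (continuous_const.mul hc)
      have : max ε (min x (1 - ε)) ≤ 1 - ε := max_le hab.le (min_le_right _ _)
      have : (0:ℝ) < 1 - max ε (min x (1 - ε)) := by linarith
      positivity
    have heq : h = fun x : ℝ =>
        (1 - ns) / (1 - max ε (min x (1 - ε))) ^ 2 - 2 * max ε (min x (1 - ε)) :=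
      funext fun x => by rw [hclamp x]; rfl
    rw [heq]; exact this
  have hd1 : deriv (psiPlusEps ns ε) = g := funext fun x => (Hf x).deriv
  have hd2 : deriv g = h := funext fun x => (Hg x).deriv
  have hdd : deriv (deriv (psiPlusEps ns ε)) = h := by rw [hd1, hd2]
  refine ⟨?_, ?_, ?_, ?_, ?_⟩
  · rw [show (2 : WithTop ℕ∞) = 1 + 1 from rfl, contDiff_succ_iff_deriv]
    refine ⟨fun x => (Hf x).differentiableAt, by simp, ?_⟩
    rw [hd1, contDiff_one_iff_deriv]
    exact ⟨fun x => (Hg x).differentiableAt, hd2 ▸ hcont⟩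
  · intro n hn
    rw [hdd]; simp only [hh]
    simp only [if_pos hn]
  · intro n hn
    rw [hdd]; simp only [hh]
    rcases eq_or_lt_of_le hn.1 with h1 | h1
    · simp only [← h1, if_pos le_rfl]
    · simp only [if_neg (not_le.mpr h1), if_pos hn.2]
  · intro n hn
    rw [hdd]; simp only [hh]
    rcases eq_or_lt_of_le hn with h1 | h1
    · simp only [← h1, if_neg (not_le.mpr hab), if_pos le_rfl]
    · simp only [if_neg (not_le.mpr (hab.trans h1)), if_neg (not_le.mpr h1)]
  · intro hns'
    refine convexOn_univ_of_deriv2_nonneg (fun x => (Hf x).differentiableAt)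
      (hd1 ▸ fun x => (Hg x).differentiableAt) fun x => ?_
    have : deriv^[2] (psiPlusEps ns ε) x = h x := by
      rw [show deriv^[2] (psiPlusEps ns ε) = deriv (deriv (psiPlusEps ns ε)) from rfl, hdd]
    rw [this, hclamp x]
    have hle : max ε (min x (1 - ε)) ≤ 1 - ε := max_le hab.le (min_le_right _ _)
    exact psiPlusDD_nonneg hns' (lt_of_lt_of_le hε (le_max_left _ _)) (by linarith)
end

section
/- Let n* ∈ (0,1). For every c ∈ (0,1) there exist ε₀ ∈ (0,1/2) and a finite constant C₁ > 0 such that for all ε ∈ (0, ε₀) and all n ∈ ℝ, ψ₊,ε(n) ≥ c·(1 − n*)/(2ε²)·(max(n − 1, 0))² − C₁. In particular, the regularized potentials ψ₊,ε are bounded from below uniformly in ε and grow quadratically beyond n = 1 with a coefficient of order ε⁻². -/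
/-- Lower bound for the left quadratic branch. -/
lemma left_bound (a P A B x : ℝ) (ha : 0 < a) (hP : -(1/3 : ℝ) ≤ P)
    (hA : a/2 ≤ A) (hB2 : B^2 ≤ 4) :
    -(1/3 + 4/a) ≤ P + B * x + (1/2) * A * x^2 := by
  have hApos : 0 < A := by linarith
  have key2 : -B^2 ≤ (B * x + (1/2) * A * x^2) * (2*A) := by
    nlinarith [sq_nonneg (A*x + B)]
  have key3 : -(4/a) ≤ B * x + (1/2) * A * x^2 := by
    set L := B * x + (1/2) * A * x^2 with hL
    rw [neg_le, le_div_iff₀ ha]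
    by_cases hL0 : 0 ≤ L
    · nlinarith [mul_nonneg hL0 ha.le]
    · push_neg at hL0
      have h2 : L * (2*A) ≤ L * a :=
        mul_le_mul_of_nonpos_left (by linarith) hL0.le
      nlinarith
  linarith

/-- Lower bound for the right quadratic branch. -/
lemma right_bound (P D DD q y m C3 : ℝ) (hP : -(1/3 : ℝ) ≤ P) (hD : 0 ≤ D)
    (hy : 0 ≤ y) (hDD : q ≤ DD) (hq : 0 ≤ q) (hm0 : 0 ≤ m) (hmy : m ≤ y)
    (hC3 : 0 < C3) :
    (1/2) * q * m^2 - (1/3 + C3) ≤ P + D * y + (1/2) * DD * y^2 := by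
  have hm2 : m^2 ≤ y^2 := by nlinarith
  nlinarith [mul_nonneg hD hy, mul_nonneg (sub_nonneg.2 hDD) (sq_nonneg y),
    mul_nonneg hq (sub_nonneg.2 hm2)]

set_option maxHeartbeats 1000000 in
theorem stmt5 (ns : ℝ) (hns : ns ∈ Set.Ioo (0 : ℝ) 1) :
    ∀ c ∈ Set.Ioo (0 : ℝ) 1, ∃ ε₀ ∈ Set.Ioo (0 : ℝ) (1 / 2), ∃ C₁ > (0 : ℝ),
      ∀ ε ∈ Set.Ioo (0 : ℝ) ε₀, ∀ n : ℝ,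
        c * (1 - ns) / (2 * ε ^ 2) * (max (n - 1) 0) ^ 2 - C₁ ≤ psiPlusEps ns ε n := by
  obtain ⟨hns0, hns1⟩ := hns
  have ha : 0 < 1 - ns := by linarith
  intro c hc
  obtain ⟨hc0, hc1⟩ := hc
  have hca : 0 < (1 - c) * (1 - ns) := by nlinarith
  refine ⟨min (1/4) ((1 - c) * (1 - ns) / 4),
    ⟨lt_min (by norm_num) (by linarith), lt_of_le_of_lt (min_le_left _ _) (by norm_num)⟩,
    1/3 + 4/(1 - ns), by positivity, ?_⟩
  intro ε hε n
  obtain ⟨hε0, hεlt⟩ := hε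
  have hε4 : ε < 1/4 := lt_of_lt_of_le hεlt (min_le_left _ _)
  have hεca : ε < (1 - c) * (1 - ns) / 4 := lt_of_lt_of_le hεlt (min_le_right _ _)
  have hε1 : ε < 1 := by linarith
  have hεsq : ε^2 < ε := by nlinarith
  have hεa4 : ε < (1 - ns)/4 := by nlinarith [mul_pos hc0 ha]
  have hεa : ε < 1 - ns := by linarith
  have h1e : (0:ℝ) < 1 - ε := by linarith
  unfold psiPlusEps
  split_ifs with h1 h2
  · -- n ≤ ε
    have hm : max (n - 1) 0 = 0 := max_eq_right (by linarith)
    rw [hm]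
    have hz : c * (1 - ns) / (2 * ε ^ 2) * 0 ^ 2 = 0 := by ring
    rw [hz, zero_sub]
    refine left_bound (1 - ns) (psiPlus ns ε) (psiPlusDD ns ε) (psiPlusD ns ε)
      (n - ε) ha ?_ ?_ ?_
    · unfold psiPlus
      have hlog : Real.log (1 - ε) ≤ 0 := Real.log_nonpos (by linarith) (by linarith)
      nlinarith [mul_nonneg ha.le (neg_nonneg.mpr hlog)]
    · unfold psiPlusDD
      have hεa4' : ε ≤ (1 - ns)/4 := hεa4.le
      have : 1 - ns ≤ (1 - ns)/(1 - ε)^2 := by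
        rw [le_div_iff₀ (by positivity)]; nlinarith
      linarith
    · unfold psiPlusD
      have hub : (1 - ns)/(1 - ε) ≤ 2 := by
        rw [div_le_iff₀ h1e]; nlinarith
      have hlb : 0 ≤ (1 - ns)/(1 - ε) := by positivity
      nlinarith [sq_nonneg ε, hεsq]
  · -- ε < n ≤ 1 - ε
    have hm : max (n - 1) 0 = 0 := max_eq_right (by linarith)
    rw [hm]
    have hz : c * (1 - ns) / (2 * ε ^ 2) * 0 ^ 2 = 0 := by ring
    rw [hz, zero_sub]
    unfold psiPlus
    push_neg at h1
    have hlog : Real.log (1 - n) ≤ 0 := Real.log_nonpos (by linarith) (by linarith)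
    have hC3 : (0:ℝ) < 4 / (1 - ns) := by positivity
    have hn3 : n^3 ≤ 1 := by
      nlinarith [mul_nonneg (by linarith : (0:ℝ) ≤ 1 - n) (by nlinarith : (0:ℝ) ≤ 1 + n + n^2)]
    nlinarith [mul_nonneg ha.le (neg_nonneg.mpr hlog)]
  · -- n > 1 - ε
    push_neg at h1 h2
    have hq : c * (1 - ns) / (2 * ε ^ 2) = (1/2) * (c * (1 - ns) / ε^2) := by ring
    rw [hq]
    refine right_bound (psiPlus ns (1 - ε)) (psiPlusD ns (1 - ε)) (psiPlusDD ns (1 - ε))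
      (c * (1 - ns) / ε^2) (n - (1 - ε)) (max (n - 1) 0) (4/(1 - ns)) ?_ ?_ ?_ ?_ ?_ ?_ ?_ ?_
    · unfold psiPlus
      have he : (1:ℝ) - (1 - ε) = ε := by ring
      rw [he]
      have hlog : Real.log ε < 0 := Real.log_neg hε0 hε1
      nlinarith [mul_pos ha (neg_pos.mpr hlog)]
    · unfold psiPlusD
      have he : (1:ℝ) - (1 - ε) = ε := by ring
      rw [he]
      have : 1 ≤ (1 - ns)/ε := by rw [le_div_iff₀ hε0]; nlinarith
      nlinarith [sq_nonneg ε]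
    · linarith
    · unfold psiPlusDD
      have he : (1:ℝ) - (1 - ε) = ε := by ring
      rw [he]
      have h2' : 2*(1 - ε) ≤ (1 - c)*(1 - ns)/ε^2 := by
        rw [le_div_iff₀ (by positivity)]; nlinarith
      have heq : (1 - ns)/ε^2 - c * (1 - ns)/ε^2 = (1 - c)*(1 - ns)/ε^2 := by ring
      linarith
    · positivity
    · exact le_max_right _ _
    · exact max_le (by linarith) (by linarith)
    · positivity
end

section
/- (Nonnegativity and upper bound from the upwind mobility.) Let N ≥ 1, d ≥ 1, κ > 0, G ∈ ℕ, and let m ∈ ℝᴺ have positive entries. Let Q ∈ ℝᴺˣᴺ be symmetric with Q_{ij} ≤ 0 and |Q_{ij}| ≤ (d+1)·m_i/κ² for all i ≠ j, and set Λ_i = { j ≠ i : Q_{ij} ≠ 0 } with card(Λ_i) ≤ G for every i. Let n ∈ [0,1]ᴺ, ξ ∈ ℝᴺ, Δt ≥ 0, and define upwind mobility coefficients B_{ij} = n_i(1 − n_j)² if ξ_i > ξ_j and B_{ij} = n_j(1 − n_i)² otherwise. Define n'_i = n_i − (Δt/m_i)·Σ_{j ≠ i} Q_{ij} B_{ij}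 (ξ_j − ξ_i). If the CFL-type condition Δt·(d+1)·G/κ² · max_{i, j ∈ Λ_i} |ξ_j − ξ_i| ≤ 1 holds (the maximum taken as 0 if all Λ_i are empty), then 0 ≤ n'_i ≤ 1 for every i. -/
set_option maxHeartbeats 1000000


theorem stmt7 (N d : ℕ) (hN : 1 ≤ N) (hd : 1 ≤ d)
    (κ : ℝ) (hκ : 0 < κ) (G : ℕ)
    (m : Fin N → ℝ) (hm : ∀ i, 0 < m i)
    (Q : Matrix (Fin N) (Fin N) ℝ) (hQsym : Q.IsSymm)
    (hQoff : ∀ i j, i ≠ j → Q i j ≤ 0)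
    (hQbound : ∀ i j, i ≠ j → |Q i j| ≤ (d + 1) * m i / κ ^ 2)
    (Λ : Fin N → Finset (Fin N))
    (hΛ : ∀ i, Λ i = Finset.univ.filter (fun j => j ≠ i ∧ Q i j ≠ 0))
    (hG : ∀ i, (Λ i).card ≤ G)
    (n : Fin N → ℝ) (hn : ∀ i, n i ∈ Set.Icc (0 : ℝ) 1)
    (ξ : Fin N → ℝ) (Δt : ℝ) (hΔt : 0 ≤ Δt)
    (B : Fin N → Fin N → ℝ)
    (hB : ∀ i j, B i j = if ξ j < ξ i then n i * (1 - n j) ^ 2 else n j * (1 - n i) ^ 2)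
    (n' : Fin N → ℝ)
    (hn' : ∀ i, n' i = n i -
      (Δt / m i) * ∑ j ∈ Finset.univ.filter (· ≠ i), Q i j * B i j * (ξ j - ξ i))
    (hCFL : ∀ i, ∀ j ∈ Λ i, Δt * (d + 1) * G / κ ^ 2 * |ξ j - ξ i| ≤ 1) :
    ∀ i, 0 ≤ n' i ∧ n' i ≤ 1 := by
  intro i
  have hmi := hm i
  obtain ⟨hn0, hn1⟩ := hn i
  -- restrict the sum to Λ i
  have hsub : Λ i ⊆ Finset.univ.filter (· ≠ i) := by
    rw [hΛ]
    intro j hj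
    simp only [Finset.mem_filter, Finset.mem_univ, true_and] at hj ⊢
    exact hj.1
  have hsum : ∑ j ∈ Finset.univ.filter (· ≠ i), Q i j * B i j * (ξ j - ξ i)
      = ∑ j ∈ Λ i, Q i j * B i j * (ξ j - ξ i) := by
    refine (Finset.sum_subset hsub ?_).symm
    intro j hjS hjΛ
    have hji : j ≠ i := by
      simp only [Finset.mem_filter, Finset.mem_univ, true_and] at hjS
      exact hjS
    have hQ0 : Q i j = 0 := by
      by_contra h
      exact hjΛ (by rw [hΛ]; simp [hji, h])
    simp [hQ0]
  have hrw : n' i = n i - ∑ j ∈ Λ i, (Δt / m i) * (Q i j * B i j * (ξ j - ξ i)) := by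
    rw [hn' i, hsum, Finset.mul_sum]
  rcases Nat.eq_zero_or_pos G with hG0 | hGpos
  · have hΛe : Λ i = ∅ := Finset.card_eq_zero.mp (Nat.le_antisymm (hG0 ▸ hG i) (Nat.zero_le _))
    rw [hrw, hΛe]
    simp
    constructor <;> linarith
  · have hGR : (0 : ℝ) < G := by exact_mod_cast hGpos
    -- per-term bounds
    have hterm : ∀ j ∈ Λ i,
        -((1 - n i) / G) ≤ (Δt / m i) * (Q i j * B i j * (ξ j - ξ i)) ∧
        (Δt / m i) * (Q i j * B i j * (ξ j - ξ i)) ≤ n i / G := by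
      intro j hj
      have hjm : j ≠ i ∧ Q i j ≠ 0 := by
        have := hj
        rw [hΛ] at this
        simpa using this
      obtain ⟨hji, hQne⟩ := hjm
      obtain ⟨hnj0, hnj1⟩ := hn j
      have hQle : Q i j ≤ 0 := hQoff i j hji.symm
      have hQb : -Q i j ≤ (d + 1) * m i / κ ^ 2 := by
        have := hQbound i j hji.symm
        rwa [abs_of_nonpos hQle] at this
      have hCFLj := hCFL i j hj
      have key1 : Δt * (-Q i j) * |ξ j - ξ i| * G ≤ m i := by
        have h2 : Δt * (-Q i j) * |ξ j - ξ i| * G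
            ≤ Δt * ((d + 1) * m i / κ ^ 2) * |ξ j - ξ i| * G := by
          have habs : (0:ℝ) ≤ |ξ j - ξ i| := abs_nonneg _
          have hGn : (0:ℝ) ≤ G := le_of_lt hGR
          have := mul_le_mul_of_nonneg_left hQb hΔt
          nlinarith [mul_le_mul_of_nonneg_right (mul_le_mul_of_nonneg_right this habs) hGn]
        have h3 : Δt * ((d + 1) * m i / κ ^ 2) * |ξ j - ξ i| * G
            = m i * (Δt * (d + 1) * G / κ ^ 2 * |ξ j - ξ i|) := by
          field_simp
        rw [h3] at h2
        nlinarith [hCFLj, hmi]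
      rcases lt_or_ge (ξ j) (ξ i) with hlt | hle
      · -- B = n i * (1 - n j)^2, ξ j - ξ i < 0, term ≥ 0
        have hBval : B i j = n i * (1 - n j) ^ 2 := by rw [hB]; simp [hlt]
        have hB0 : 0 ≤ B i j := by rw [hBval]; positivity
        have hBle : B i j ≤ n i := by
          rw [hBval]
          nlinarith [mul_nonneg hn0 (mul_nonneg hnj0 (by linarith : (0:ℝ) ≤ 2 - n j))]
        have habs : |ξ j - ξ i| = ξ i - ξ j := by
          rw [abs_of_neg (by linarith)]
          ring
        rw [habs] at key1
        constructor
        · have h1 : 0 ≤ Q i j * (ξ j - ξ i) := by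
            nlinarith [mul_nonneg (neg_nonneg.2 hQle) (sub_nonneg.2 hlt.le)]
          have h2 : (0:ℝ) ≤ Δt / m i := by positivity
          have h3 : (0:ℝ) ≤ (1 - n i) / G := div_nonneg (by linarith) hGR.le
          nlinarith [mul_nonneg (mul_nonneg h2 h1) hB0]
        · rw [div_mul_eq_mul_div, div_le_div_iff₀ hmi hGR]
          have prod : (Δt * (-Q i j) * (ξ i - ξ j) * G) * B i j ≤ m i * n i :=
            mul_le_mul key1 hBle hB0 (le_of_lt hmi)
          nlinarith [prod]
      · -- B = n j * (1 - n i)^2, ξ j - ξ i ≥ 0, term ≤ 0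
        have hBval : B i j = n j * (1 - n i) ^ 2 := by
          rw [hB]; rw [if_neg (not_lt.mpr hle)]
        have hB0 : 0 ≤ B i j := by rw [hBval]; positivity
        have hBle : B i j ≤ 1 - n i := by
          rw [hBval]
          nlinarith [mul_nonneg (sub_nonneg.2 hn1) (sub_nonneg.2 hnj1), sq_nonneg (1 - n i)]
        have habs : |ξ j - ξ i| = ξ j - ξ i := abs_of_nonneg (by linarith)
        rw [habs] at key1
        constructor
        · rw [neg_le, div_mul_eq_mul_div, ← neg_div, div_le_div_iff₀ hmi hGR]
          have prod : (Δt * (-Q i j) * (ξ j - ξ i) * G) * B i j ≤ m i * (1 - n i) :=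
            mul_le_mul key1 hBle hB0 (le_of_lt hmi)
          nlinarith [prod]
        · have h1 : Q i j * (ξ j - ξ i) ≤ 0 := mul_nonpos_of_nonpos_of_nonneg hQle (by linarith)
          have h2 : (0:ℝ) ≤ Δt / m i := by positivity
          have h3 : (0:ℝ) ≤ n i / G := by positivity
          nlinarith [mul_nonneg h2 hB0, mul_nonpos_of_nonneg_of_nonpos (mul_nonneg h2 hB0) h1]
    -- sum the bounds
    have hub : ∑ j ∈ Λ i, (Δt / m i) * (Q i j * B i j * (ξ j - ξ i)) ≤ n i := by
      calc ∑ j ∈ Λ i, (Δt / m i) * (Q i j * B i j * (ξ j - ξ i))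
          ≤ (Λ i).card • (n i / G) :=
            Finset.sum_le_card_nsmul _ _ _ (fun j hj => (hterm j hj).2)
        _ = ((Λ i).card : ℝ) * (n i / G) := by rw [nsmul_eq_mul]
        _ ≤ (G : ℝ) * (n i / G) := by
            apply mul_le_mul_of_nonneg_right _ (by positivity)
            exact_mod_cast hG i
        _ = n i := by field_simp
    have hlb : -(1 - n i) ≤ ∑ j ∈ Λ i, (Δt / m i) * (Q i j * B i j * (ξ j - ξ i)) := by
      calc -(1 - n i) = (G : ℝ) * (-((1 - n i) / G)) := by field_simp
        _ ≤ ((Λ i).card : ℝ) * (-((1 - n i) / G)) := by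
            apply mul_le_mul_of_nonpos_right _ (by
              have : (0:ℝ) ≤ (1 - n i) / G := div_nonneg (by linarith) hGR.le
              linarith)
            exact_mod_cast hG i
        _ = (Λ i).card • (-((1 - n i) / G)) := by rw [nsmul_eq_mul]
        _ ≤ ∑ j ∈ Λ i, (Δt / m i) * (Q i j * B i j * (ξ j - ξ i)) :=
            Finset.card_nsmul_le_sum _ _ _ (fun j hj => (hterm j hj).1)
    rw [hrw]
    constructor <;> linarith
end

section
/- (Bound preservation for the linear upwind scheme.) Let N ≥ 1, d ≥ 1, κ > 0, G ∈ ℕ, m ∈ ℝᴺ with positive entries and M = diag(m). Let Q ∈ ℝᴺˣᴺ be symmetric with Q_{ij} ≤ 0 and |Q_{ij}| ≤ (d+1)m_i/κ² for i ≠ j, with Λ_i = { j ≠ i : Q_{ij} ≠ 0 } and card(Λ_i) ≤ G. Let L ∈ ℝᴺˣᴺ satisfy L_{ij} ≤ 0 for i ≠ j and Σ_j L_{ij} = 0 for every i. Let Δt > 0, let n^k ∈ ℝᴺ with 0 ≤ n^k_i < 1 for all i, let φ ∈ ℝᴺ, and define the upwind coefficients B_{ij} = n^k_i(1 − n^k_j)²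 if φ_i > φ_j and B_{ij} = n^k_j(1 − n^k_i)² otherwise, and the matrix U by U_{ij} = Q_{ij}B_{ij} for i ≠ j and U_{ii} = −Σ_{j≠i}U_{ij}. If the strict CFL condition Δt·(d+1)·G/κ² · max_{i, j ∈ Λ_i}|φ_j − φ_i| < 1 holds, then the unique solution n^{k+1} of (M + ΔtL)n^{k+1} = Mn^k − ΔtUφ satisfies 0 ≤ n^{k+1}_i < 1 for every i. -/
private lemma stmt12_aux (a s mG x : ℝ) (ha0 : 0 ≤ a) (ha1 : a ≤ x)
    (hx : 0 < x) (hmG : 0 < mG) (hs1 : -mG < s) (hs2 : s ≤ 0) :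
    -(x * mG) < a * s := by
  rcases eq_or_lt_of_le ha0 with h0 | h0
  · rw [← h0, zero_mul]
    nlinarith
  · rcases eq_or_lt_of_le ha1 with h1 | h1
    · have := mul_lt_mul_of_pos_left hs1 h0
      rw [h1] at this ⊢
      nlinarith
    · nlinarith [mul_le_mul_of_nonneg_left (le_of_lt hs1) ha0]


set_option maxHeartbeats 2000000 in
theorem stmt12 (N d : ℕ) (hN : 1 ≤ N) (hd : 1 ≤ d)
    (κ : ℝ) (hκ : 0 < κ) (G : ℕ)
    (m : Fin N → ℝ) (hm : ∀ i, 0 < m i)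
    (M : Matrix (Fin N) (Fin N) ℝ) (hM : M = Matrix.diagonal m)
    (Q : Matrix (Fin N) (Fin N) ℝ) (hQsym : Q.IsSymm)
    (hQoff : ∀ i j, i ≠ j → Q i j ≤ 0)
    (hQbound : ∀ i j, i ≠ j → |Q i j| ≤ (d + 1) * m i / κ ^ 2)
    (Λ : Fin N → Finset (Fin N))
    (hΛ : ∀ i, Λ i = Finset.univ.filter (fun j => j ≠ i ∧ Q i j ≠ 0))
    (hG : ∀ i, (Λ i).card ≤ G)
    (L : Matrix (Fin N) (Fin N) ℝ)
    (hLoff : ∀ i j, i ≠ j → L i j ≤ 0) (hLrow : ∀ i, ∑ j, L i j = 0)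
    (Δt : ℝ) (hΔt : 0 < Δt)
    (nk : Fin N → ℝ) (hnk : ∀ i, 0 ≤ nk i ∧ nk i < 1)
    (φ : Fin N → ℝ)
    (B : Fin N → Fin N → ℝ)
    (hB : ∀ i j, B i j = if φ j < φ i then nk i * (1 - nk j) ^ 2 else nk j * (1 - nk i) ^ 2)
    (U : Matrix (Fin N) (Fin N) ℝ)
    (hUoff : ∀ i j, i ≠ j → U i j = Q i j * B i j)
    (hUdiag : ∀ i, U i i = -∑ j ∈ Finset.univ.filter (· ≠ i), U i j)
    (hCFL : ∀ i, ∀ j ∈ Λ i, Δt * (d + 1) * G / κ ^ 2 * |φ j - φ i| < 1)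
    (nk1 : Fin N → ℝ)
    (hsol : (M + Δt • L).mulVec nk1 = M.mulVec nk - Δt • U.mulVec φ) :
    ∀ i, 0 ≤ nk1 i ∧ nk1 i < 1 := by
  subst hM
  -- membership in Λ i
  have hmemΛ : ∀ i j, j ∈ Λ i → j ≠ i ∧ Q i j ≠ 0 := by
    intro i j hj
    rw [hΛ i, Finset.mem_filter] at hj
    exact hj.2
  -- if some Λ i is nonempty, then G ≥ 1
  have hGpos : ∀ i j, j ∈ Λ i → (0:ℝ) < G := by
    intro i j hj
    have h1 : 0 < (Λ i).card := Finset.card_pos.mpr ⟨j, hj⟩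
    have h2 := hG i
    have : 0 < G := lt_of_lt_of_le h1 h2
    exact_mod_cast this
  -- the key CFL-derived bound on each term
  have hQφ : ∀ i, ∀ j ∈ Λ i, Δt * |Q i j * (φ j - φ i)| < m i / G := by
    intro i j hj
    obtain ⟨hji, hQne⟩ := hmemΛ i j hj
    have hGp : (0:ℝ) < G := hGpos i j hj
    have hmi := hm i
    have hcfl := hCFL i j hj
    have hX : (0:ℝ) ≤ |φ j - φ i| := abs_nonneg _
    have hQb := hQbound i j (Ne.symm hji)
    have habs : |Q i j * (φ j - φ i)| = |Q i j| * |φ j - φ i| := abs_mul _ _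
    have h1 : Δt * |Q i j * (φ j - φ i)| ≤ Δt * (((d:ℝ) + 1) * m i / κ ^ 2 * |φ j - φ i|) := by
      rw [habs]
      have := mul_le_mul_of_nonneg_right hQb hX
      nlinarith
    have h2 : Δt * (((d:ℝ) + 1) * m i / κ ^ 2 * |φ j - φ i|)
        = Δt * ((d:ℝ) + 1) * G / κ ^ 2 * |φ j - φ i| * (m i / G) := by
      field_simp
    have h3 : Δt * ((d:ℝ) + 1) * G / κ ^ 2 * |φ j - φ i| * (m i / G) < 1 * (m i / G) :=
      mul_lt_mul_of_pos_right hcfl (div_pos hmi hGp)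
    calc Δt * |Q i j * (φ j - φ i)| ≤ _ := h1
      _ = _ := h2
      _ < 1 * (m i / G) := h3
      _ = m i / G := one_mul _
  -- per-term upper bound
  have hterm_ub : ∀ i, ∀ j ∈ Λ i, Δt * (U i j * (φ j - φ i)) ≤ nk i * (m i / G) := by
    intro i j hj
    obtain ⟨hji, hQne⟩ := hmemΛ i j hj
    have hGp : (0:ℝ) < G := hGpos i j hj
    have hmi := hm i
    have hU : U i j = Q i j * B i j := hUoff i j (Ne.symm hji)
    have hQn : Q i j ≤ 0 := hQoff i j (Ne.symm hji)
    have hQa := hQφ i j hj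
    have hnki := hnk i
    have hnkj := hnk j
    by_cases hφ : φ j < φ i
    · -- B = nk i * (1 - nk j)^2, Q*(φj-φi) ≥ 0
      rw [hU, hB, if_pos hφ]
      have hq0 : 0 ≤ Q i j * (φ j - φ i) := by nlinarith
      have habs : |Q i j * (φ j - φ i)| = Q i j * (φ j - φ i) := abs_of_nonneg hq0
      rw [habs] at hQa
      have hsq : (1 - nk j) ^ 2 ≤ 1 := by nlinarith [hnkj.1, hnkj.2]
      have hsq0 : 0 ≤ (1 - nk j) ^ 2 := sq_nonneg _
      have hgoal : Q i j * (nk i * (1 - nk j) ^ 2) * (φ j - φ i)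
          = nk i * ((1 - nk j) ^ 2 * (Q i j * (φ j - φ i))) := by ring
      have hs0 : 0 ≤ Δt * (Q i j * (φ j - φ i)) := mul_nonneg hΔt.le hq0
      nlinarith [mul_le_mul_of_nonneg_left hQa.le (mul_nonneg hnki.1 hsq0),
        mul_nonneg hnki.1 (div_pos hmi hGp).le,
        mul_nonneg hnki.1 hs0, hsq, hsq0]
    · -- B = nk j * (1 - nk i)^2, Q*(φj-φi) ≤ 0, so the term is ≤ 0
      rw [hU, hB, if_neg hφ]
      push_neg at hφ
      have hq0 : Q i j * (φ j - φ i) ≤ 0 :=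
        mul_nonpos_of_nonpos_of_nonneg hQn (by linarith)
      have ht : Δt * (Q i j * (nk j * (1 - nk i) ^ 2) * (φ j - φ i)) ≤ 0 := by
        have ha : 0 ≤ nk j * (1 - nk i) ^ 2 := mul_nonneg hnkj.1 (sq_nonneg _)
        nlinarith [mul_nonneg ha (neg_nonneg.mpr hq0)]
      have : 0 ≤ nk i * (m i / G) :=
        mul_nonneg hnki.1 (div_pos hmi hGp).le
      linarith
  -- per-term strict lower bound
  have hterm_lb : ∀ i, ∀ j ∈ Λ i,
      -((1 - nk i) * (m i / G)) < Δt * (U i j * (φ j - φ i)) := by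
    intro i j hj
    obtain ⟨hji, hQne⟩ := hmemΛ i j hj
    have hGp : (0:ℝ) < G := hGpos i j hj
    have hmi := hm i
    have hU : U i j = Q i j * B i j := hUoff i j (Ne.symm hji)
    have hQn : Q i j ≤ 0 := hQoff i j (Ne.symm hji)
    have hQa := hQφ i j hj
    have hnki := hnk i
    have hnkj := hnk j
    have hpos : 0 < (1 - nk i) * (m i / G) :=
      mul_pos (by linarith [hnki.2]) (div_pos hmi hGp)
    by_cases hφ : φ j < φ i
    · rw [hU, hB, if_pos hφ]
      have hq0 : 0 ≤ Q i j * (φ j - φ i) := by nlinarith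
      have ht : 0 ≤ Δt * (Q i j * (nk i * (1 - nk j) ^ 2) * (φ j - φ i)) := by
        have ha : 0 ≤ nk i * (1 - nk j) ^ 2 := mul_nonneg hnki.1 (sq_nonneg _)
        nlinarith [mul_nonneg ha (mul_nonneg hΔt.le hq0)]
      linarith
    · rw [hU, hB, if_neg hφ]
      push_neg at hφ
      have hq0 : Q i j * (φ j - φ i) ≤ 0 :=
        mul_nonpos_of_nonpos_of_nonneg hQn (by linarith)
      have habs : |Q i j * (φ j - φ i)| = -(Q i j * (φ j - φ i)) := abs_of_nonpos hq0
      rw [habs] at hQa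
      have hs1 : -(m i / G) < Δt * (Q i j * (φ j - φ i)) := by nlinarith
      have hs2 : Δt * (Q i j * (φ j - φ i)) ≤ 0 :=
        mul_nonpos_of_nonneg_of_nonpos hΔt.le hq0
      have ha0 : 0 ≤ nk j * (1 - nk i) ^ 2 := mul_nonneg hnkj.1 (sq_nonneg _)
      have ha1 : nk j * (1 - nk i) ^ 2 ≤ 1 - nk i := by
        nlinarith [hnkj.2, hnki.1, hnki.2, sq_nonneg (1 - nk i)]
      have hkey := stmt12_aux (nk j * (1 - nk i) ^ 2) (Δt * (Q i j * (φ j - φ i)))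
        (m i / G) (1 - nk i) ha0 ha1 (by linarith [hnki.2]) (div_pos hmi hGp) hs1 hs2
      have hgoal : Δt * (Q i j * (nk j * (1 - nk i) ^ 2) * (φ j - φ i))
          = nk j * (1 - nk i) ^ 2 * (Δt * (Q i j * (φ j - φ i))) := by ring
      rw [hgoal]
      exact hkey
  -- the right-hand side in convenient form
  set r : Fin N → ℝ := fun i => m i * nk i - ∑ j ∈ Λ i, Δt * (U i j * (φ j - φ i)) with hrdef
  have hr0 : ∀ i, 0 ≤ r i := by
    intro i
    have hsum : ∑ j ∈ Λ i, Δt * (U i j * (φ j - φ i)) ≤ m i * nk i := by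
      rcases (Λ i).eq_empty_or_nonempty with h | h
      · rw [h, Finset.sum_empty]
        exact mul_nonneg (hm i).le (hnk i).1
      · obtain ⟨j0, hj0⟩ := h
        have hGp : (0:ℝ) < G := hGpos i j0 hj0
        calc ∑ j ∈ Λ i, Δt * (U i j * (φ j - φ i))
            ≤ ∑ _j ∈ Λ i, nk i * (m i / G) := Finset.sum_le_sum (hterm_ub i)
          _ = (Λ i).card * (nk i * (m i / G)) := by
              rw [Finset.sum_const, nsmul_eq_mul]
          _ ≤ G * (nk i * (m i / G)) := by
              have hc : ((Λ i).card : ℝ) ≤ G := by exact_mod_cast hG i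
              have hnn : 0 ≤ nk i * (m i / G) :=
                mul_nonneg (hnk i).1 (div_pos (hm i) hGp).le
              exact mul_le_mul_of_nonneg_right hc hnn
          _ = m i * nk i := by field_simp
    simp only [hrdef]
    linarith
  have hr1 : ∀ i, r i < m i := by
    intro i
    have hsum : -((1 - nk i) * m i) < ∑ j ∈ Λ i, Δt * (U i j * (φ j - φ i)) := by
      rcases (Λ i).eq_empty_or_nonempty with h | h
      · rw [h, Finset.sum_empty]
        have : 0 < (1 - nk i) * m i := mul_pos (by linarith [(hnk i).2]) (hm i)
        linarith
      · obtain ⟨j0, hj0⟩ := h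
        have hGp : (0:ℝ) < G := hGpos i j0 hj0
        have hstep : ∑ _j ∈ Λ i, -((1 - nk i) * (m i / G))
            < ∑ j ∈ Λ i, Δt * (U i j * (φ j - φ i)) :=
          Finset.sum_lt_sum_of_nonempty ⟨j0, hj0⟩ (hterm_lb i)
        have hconst : -((1 - nk i) * m i) ≤ ∑ _j ∈ Λ i, -((1 - nk i) * (m i / G)) := by
          rw [Finset.sum_const, nsmul_eq_mul]
          have hc : ((Λ i).card : ℝ) ≤ G := by exact_mod_cast hG i
          have hnn : 0 ≤ (1 - nk i) * (m i / G) :=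
            mul_nonneg (by linarith [(hnk i).2]) (div_pos (hm i) hGp).le
          have h1 : ((Λ i).card : ℝ) * ((1 - nk i) * (m i / G))
              ≤ (G:ℝ) * ((1 - nk i) * (m i / G)) := mul_le_mul_of_nonneg_right hc hnn
          have h2 : (G:ℝ) * ((1 - nk i) * (m i / G)) = (1 - nk i) * m i := by
            field_simp
          nlinarith
        linarith
    have hnki := (hnk i)
    simp only [hrdef]
    nlinarith [hm i]
  -- the solved equation, rowwise, with RHS rewritten as r
  have heq : ∀ i, ∑ j, (Matrix.diagonal m + Δt • L) i j * nk1 j = r i := by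
    intro i
    have h1 := congrFun hsol i
    have hlhs : (Matrix.diagonal m + Δt • L).mulVec nk1 i
        = ∑ j, (Matrix.diagonal m + Δt • L) i j * nk1 j := by
      simp [Matrix.mulVec, dotProduct]
    have hM1 : (Matrix.diagonal m).mulVec nk i = m i * nk i := by
      simp [Matrix.mulVec_diagonal]
    have hU1 : U.mulVec φ i = ∑ j, U i j * φ j := by
      simp [Matrix.mulVec, dotProduct]
    -- rewrite ∑ j, U i j * φ j
    have hdiffset : (Finset.univ : Finset (Fin N)) \ {i} = Finset.univ.filter (· ≠ i) := by
      ext x; simp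
    have hsplit0 : ∑ j, U i j * φ j
        = ∑ j ∈ Finset.univ.filter (· ≠ i), U i j * φ j + U i i * φ i := by
      rw [Finset.sum_eq_sum_sdiff_singleton_add (Finset.mem_univ i) (fun j => U i j * φ j),
        hdiffset]
    have hsub : ∑ j ∈ Finset.univ.filter (· ≠ i), U i j * (φ j - φ i)
        = (∑ j ∈ Finset.univ.filter (· ≠ i), U i j * φ j)
          - (∑ j ∈ Finset.univ.filter (· ≠ i), U i j) * φ i := by
      rw [Finset.sum_mul, ← Finset.sum_sub_distrib]
      apply Finset.sum_congr rfl
      intro j _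
      ring
    have hsplit : ∑ j, U i j * φ j
        = ∑ j ∈ Finset.univ.filter (· ≠ i), U i j * (φ j - φ i) := by
      rw [hsplit0, hUdiag i, hsub]
      ring
    have hres : ∑ j ∈ Λ i, U i j * (φ j - φ i)
        = ∑ j ∈ Finset.univ.filter (· ≠ i), U i j * (φ j - φ i) := by
      apply Finset.sum_subset
      · intro x hx
        rw [hΛ i] at hx
        rw [Finset.mem_filter] at hx ⊢
        exact ⟨hx.1, hx.2.1⟩
      · intro x hx1 hx2
        rw [Finset.mem_filter] at hx1
        rw [hΛ i, Finset.mem_filter] at hx2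
        have hQ0 : Q i x = 0 := by
          by_contra hc
          exact hx2 ⟨hx1.1, hx1.2, hc⟩
        rw [hUoff i x (Ne.symm hx1.2), hQ0, zero_mul, zero_mul]
    rw [hlhs] at h1
    rw [h1]
    simp only [Pi.sub_apply, Pi.smul_apply, smul_eq_mul, hrdef]
    rw [hM1, hU1, hsplit, ← hres, Finset.mul_sum]
  -- entries and row sums of A = diagonal m + Δt • L
  have hAoff : ∀ i j, j ≠ i → (Matrix.diagonal m + Δt • L) i j ≤ 0 := by
    intro i j hji
    have : (Matrix.diagonal m + Δt • L) i j = Δt * L i j := by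
      simp [Matrix.add_apply, Matrix.diagonal_apply_ne' m hji]
    rw [this]
    exact mul_nonpos_of_nonneg_of_nonpos hΔt.le (hLoff i j (Ne.symm hji))
  have hArow : ∀ i, ∑ j, (Matrix.diagonal m + Δt • L) i j = m i := by
    intro i
    have : ∀ j, (Matrix.diagonal m + Δt • L) i j = Matrix.diagonal m i j + Δt * L i j := by
      intro j; simp [Matrix.add_apply]
    simp_rw [this]
    rw [Finset.sum_add_distrib, ← Finset.mul_sum, hLrow i, mul_zero, add_zero]
    simp [Matrix.diagonal_apply, Finset.sum_ite_eq' Finset.univ i]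
  -- discrete maximum principle
  have hne : Nonempty (Fin N) := ⟨⟨0, hN⟩⟩
  have huniv : (Finset.univ : Finset (Fin N)).Nonempty := Finset.univ_nonempty
  -- lower bound
  obtain ⟨i0, _, hmin⟩ := Finset.exists_min_image Finset.univ nk1 huniv
  have hlow : 0 ≤ nk1 i0 := by
    have h1 : r i0 ≤ ∑ j, (Matrix.diagonal m + Δt • L) i0 j * nk1 i0 := by
      rw [← heq i0]
      apply Finset.sum_le_sum
      intro j _
      rcases eq_or_ne j i0 with h | h
      · rw [h]
      · have hA := hAoff i0 j h
        have hmin' := hmin j (Finset.mem_univ j)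
        nlinarith
    have h2 : ∑ j, (Matrix.diagonal m + Δt • L) i0 j * nk1 i0 = m i0 * nk1 i0 := by
      rw [← Finset.sum_mul, hArow i0]
    rw [h2] at h1
    nlinarith [hr0 i0, hm i0]
  -- upper bound
  obtain ⟨i1, _, hmax⟩ := Finset.exists_max_image Finset.univ nk1 huniv
  have hhigh : nk1 i1 < 1 := by
    have h1 : ∑ j, (Matrix.diagonal m + Δt • L) i1 j * nk1 i1 ≤ r i1 := by
      rw [← heq i1]
      apply Finset.sum_le_sum
      intro j _
      rcases eq_or_ne j i1 with h | h
      · rw [h]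
      · have hA := hAoff i1 j h
        have hmax' := hmax j (Finset.mem_univ j)
        nlinarith
    have h2 : ∑ j, (Matrix.diagonal m + Δt • L) i1 j * nk1 i1 = m i1 * nk1 i1 := by
      rw [← Finset.sum_mul, hArow i1]
    rw [h2] at h1
    nlinarith [hr1 i1, hm i1]
  intro i
  exact ⟨le_trans hlow (hmin i (Finset.mem_univ i)),
    lt_of_le_of_lt (hmax i (Finset.mem_univ i)) hhigh⟩
end

section
/- (Limit ε → 0 of the regularized discrete solutions: strict upper bound.) Let n* ∈ (0,1), N ≥ 1, let w ∈ ℝᴺ have strictly positive entries, and let C ≥ 0. Let (ε_k) ⊂ (0,1/2) with ε_k → 0, and for each k let n^{(k)} ∈ ℝᴺ be a vector with n^{(k)}_i ≥ 0 for all i and Σ_i w_i·ψ₊,ε_k(n^{(k)}_i) ≤ C. If n^{(k)} converges to a vector n as k → ∞, then 0 ≤ n_i < 1 for every i. -/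
lemma lemA (ns ε x : ℝ) (hns : ns ∈ Set.Ioo (0:ℝ) 1) (hε0 : 0 < ε) (hε2 : ε < 1/2)
    (hεc : ε ≤ (1 - ns)/2) (hx : 0 ≤ x) : -2 ≤ psiPlusEps ns ε x := by
  obtain ⟨h0, h1⟩ := hns
  have hc0 : 0 < 1 - ns := by linarith
  have hd : (0:ℝ) < 1 - ε := by linarith
  unfold psiPlusEps psiPlus psiPlusD psiPlusDD
  split_ifs with h h'
  · have hl : Real.log (1 - ε) ≤ 0 := Real.log_nonpos (by linarith) (by linarith)
    have hq1 : 0 < (1 - ns) / (1 - ε) := div_pos hc0 hd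
    have hq2 : (1 - ns) / (1 - ε) ≤ 2 := by rw [div_le_iff₀ hd]; nlinarith
    have hq3 : 0 < (1 - ns) / (1 - ε) ^ 2 := div_pos hc0 (by positivity)
    nlinarith [sq_nonneg (x - ε), mul_nonneg (le_of_lt hq3) (sq_nonneg (x - ε)),
      mul_nonneg hc0.le (neg_nonneg.mpr hl)]
  · have hl : Real.log (1 - x) ≤ 0 := Real.log_nonpos (by linarith) (by linarith)
    have hx1 : x ≤ 1 := by linarith
    nlinarith [mul_nonneg hc0.le (neg_nonneg.mpr hl), pow_le_one₀ hx hx1 (n:=3)]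
  · push_neg at h h'
    have hl : Real.log ε ≤ 0 := Real.log_nonpos hε0.le (by linarith)
    have hq1 : (2:ℝ) ≤ (1 - ns) / ε := by rw [le_div_iff₀ hε0]; linarith
    have hq2 : (4:ℝ) ≤ (1 - ns) / ε ^ 2 := by
      rw [le_div_iff₀ (by positivity)]; nlinarith
    have hxe : 0 < x - (1 - ε) := by linarith
    rw [show (1:ℝ) - (1 - ε) = ε from by ring]
    nlinarith [mul_nonneg hc0.le (neg_nonneg.mpr hl), sq_nonneg (x - (1 - ε)),
      mul_le_mul_of_nonneg_right hq1 hxe.le,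
      mul_le_mul_of_nonneg_right hq2 (sq_nonneg (x - (1 - ε))),
      mul_le_mul_of_nonneg_right (show (2:ℝ) - (1-ε)^2 ≥ 0 by nlinarith) hxe.le]

lemma lemB (ns ε δ x : ℝ) (hns : ns ∈ Set.Ioo (0:ℝ) 1) (hε0 : 0 < ε) (hεδ : ε ≤ δ)
    (hδc : δ ≤ (1 - ns)/2) (hδ2 : δ < 1/2) (hx : 1 - δ ≤ x) :
    -(1 - ns) * Real.log δ - 1/3 ≤ psiPlusEps ns ε x := by
  obtain ⟨h0, h1⟩ := hns
  have hc0 : 0 < 1 - ns := by linarith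
  have hδ0 : 0 < δ := lt_of_lt_of_le hε0 hεδ
  have hnb1 : ¬ (x ≤ ε) := by push_neg; linarith
  unfold psiPlusEps psiPlus psiPlusD psiPlusDD
  rw [if_neg hnb1]
  split_ifs with h'
  · have h1x : 0 < 1 - x := by linarith
    have hlog : Real.log (1 - x) ≤ Real.log δ := Real.log_le_log h1x (by linarith)
    have hx1 : x ≤ 1 := by linarith
    have hx0 : 0 ≤ x := by linarith
    nlinarith [mul_le_mul_of_nonneg_left hlog hc0.le, pow_le_one₀ hx0 hx1 (n:=3)]
  · push_neg at h'
    have hlog : Real.log ε ≤ Real.log δ := Real.log_le_log hε0 hεδ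
    have hq1 : (2:ℝ) ≤ (1 - ns) / ε := by rw [le_div_iff₀ hε0]; linarith
    have hq2 : (4:ℝ) ≤ (1 - ns) / ε ^ 2 := by
      rw [le_div_iff₀ (by positivity)]; nlinarith
    have hxe : 0 < x - (1 - ε) := by linarith
    rw [show (1:ℝ) - (1 - ε) = ε from by ring]
    nlinarith [mul_le_mul_of_nonneg_left hlog hc0.le, sq_nonneg (x - (1 - ε)),
      mul_le_mul_of_nonneg_right (show (0:ℝ) ≤ (1-ns)/ε - (1-ε)^2 by nlinarith) hxe.le,
      mul_le_mul_of_nonneg_right (show (0:ℝ) ≤ (1-ns)/ε^2 - 2*(1-ε) by nlinarith)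
        (sq_nonneg (x - (1 - ε)))]

theorem stmt13 (ns : ℝ) (hns : ns ∈ Set.Ioo (0 : ℝ) 1)
    (N : ℕ) (hN : 1 ≤ N)
    (w : Fin N → ℝ) (hw : ∀ i, 0 < w i) (C : ℝ) (hC : 0 ≤ C)
    (ε : ℕ → ℝ) (hε : ∀ k, ε k ∈ Set.Ioo (0 : ℝ) (1 / 2))
    (hε0 : Filter.Tendsto ε Filter.atTop (nhds 0))
    (nseq : ℕ → Fin N → ℝ) (hpos : ∀ k i, 0 ≤ nseq k i)
    (hbound : ∀ k, ∑ i, w i * psiPlusEps ns (ε k) (nseq k i) ≤ C)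
    (n : Fin N → ℝ) (hconv : Filter.Tendsto nseq Filter.atTop (nhds n)) :
    ∀ i, 0 ≤ n i ∧ n i < 1 := by
  obtain ⟨h0, h1⟩ := hns
  have hc0 : 0 < 1 - ns := by linarith
  intro i
  have hci : Filter.Tendsto (fun k => nseq k i) Filter.atTop (nhds (n i)) :=
    ((continuous_apply i).tendsto n).comp hconv
  have hni0 : 0 ≤ n i := ge_of_tendsto' hci (fun k => hpos k i)
  refine ⟨hni0, ?_⟩
  by_contra hcon
  push_neg at hcon
  -- set up constants
  set W : ℝ := ∑ j, w j with hW
  have hW0 : 0 ≤ W := Finset.sum_nonneg (fun j _ => (hw j).le)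
  set B : ℝ := ((C + 2 * W) / w i + 1 / 3 + 1) / (1 - ns) with hB
  set δ : ℝ := min ((1 - ns) / 2) (min (1/4) (Real.exp (-B))) with hδ
  have hδ0 : 0 < δ := by
    apply lt_min (by linarith)
    exact lt_min (by norm_num) (Real.exp_pos _)
  have hδc : δ ≤ (1 - ns) / 2 := min_le_left _ _
  have hδ2 : δ < 1/2 := lt_of_le_of_lt ((min_le_right _ _).trans (min_le_left _ _)) (by norm_num)
  have hδB : Real.log δ ≤ -B := by
    calc Real.log δ ≤ Real.log (Real.exp (-B)) :=
          Real.log_le_log hδ0 ((min_le_right _ _).trans (min_le_right _ _))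
      _ = -B := Real.log_exp _
  -- eventually facts
  have hev1 : ∀ᶠ k in Filter.atTop, ε k < δ := hε0.eventually (gt_mem_nhds hδ0)
  have hev2 : ∀ᶠ k in Filter.atTop, n i - δ < nseq k i :=
    hci.eventually (lt_mem_nhds (by linarith : n i - δ < n i))
  obtain ⟨k, hk1, hk2⟩ := (hev1.and hev2).exists
  obtain ⟨hεk0, hεk2⟩ := hε k
  have hεδ : ε k ≤ δ := hk1.le
  have hxk : 1 - δ ≤ nseq k i := by linarith
  -- lower bound for the i-th term
  have hBi : -(1 - ns) * Real.log δ - 1/3 ≤ psiPlusEps ns (ε k) (nseq k i) :=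
    lemB ns (ε k) δ (nseq k i) ⟨h0, h1⟩ hεk0 hεδ hδc hδ2 hxk
  -- big value
  have hbig : (C + 2 * W) / w i + 1 ≤ psiPlusEps ns (ε k) (nseq k i) := by
    refine le_trans ?_ hBi
    have : (1 - ns) * B ≤ -(1 - ns) * Real.log δ := by nlinarith
    have hBval : (1 - ns) * B = (C + 2 * W) / w i + 1 / 3 + 1 := by
      rw [hB]; field_simp
    linarith
  -- lower bound for the other terms
  have hsum : w i * psiPlusEps ns (ε k) (nseq k i) - 2 * W ≤
      ∑ j, w j * psiPlusEps ns (ε k) (nseq k j) := by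
    have key : ∀ j, j ≠ i → w j * (-2) ≤ w j * psiPlusEps ns (ε k) (nseq k j) := by
      intro j _
      apply mul_le_mul_of_nonneg_left _ (hw j).le
      exact lemA ns (ε k) (nseq k j) ⟨h0, h1⟩ hεk0 hεk2 (hεδ.trans hδc) (hpos k j)
    have h2 : ∑ j ∈ Finset.univ.erase i, w j * (-2) ≤
        ∑ j ∈ Finset.univ.erase i, w j * psiPlusEps ns (ε k) (nseq k j) :=
      Finset.sum_le_sum (fun j hj => key j (Finset.ne_of_mem_erase hj))
    have h3 : ∑ j ∈ Finset.univ.erase i, w j ≤ W :=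
      Finset.sum_le_sum_of_subset_of_nonneg (Finset.erase_subset _ _)
        (fun j _ _ => (hw j).le)
    have h4 : ∑ j ∈ Finset.univ.erase i, w j * psiPlusEps ns (ε k) (nseq k j)
        + w i * psiPlusEps ns (ε k) (nseq k i)
        = ∑ j, w j * psiPlusEps ns (ε k) (nseq k j) :=
      Finset.sum_erase_add _ _ (Finset.mem_univ i)
    have h5 : ∑ j ∈ Finset.univ.erase i, w j * (-2) =
        (∑ j ∈ Finset.univ.erase i, w j) * (-2) := by
      rw [Finset.sum_mul]
    nlinarith
  have hfin : w i * psiPlusEps ns (ε k) (nseq k i) ≤ C + 2 * W := by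
    have := hbound k
    linarith
  have hwi := hw i
  have : C + 2 * W + w i ≤ w i * psiPlusEps ns (ε k) (nseq k i) := by
    have := mul_le_mul_of_nonneg_left hbig hwi.le
    calc C + 2 * W + w i = w i * ((C + 2 * W) / w i + 1) := by field_simp
      _ ≤ _ := this
  linarith
end

section
/- (Key inequality in the proof of the discrete H¹-estimate for φ.) Let N ≥ 1, m ∈ ℝᴺ with positive entries and M = diag(m), Q ∈ ℝᴺˣᴺ symmetric positive semidefinite, σ, γ > 0 and n* ∈ (0,1) with (σ/γ)(1 − n*) ≤ 1. Define the affine function r(s) = −(1 − n*)(s + 1) (applied componentwise). Suppose vectors n^{k−1}, n^k, n^{k+1}, υ^{k−1}, υ^k, υ^{k+1} ∈ ℝᴺ satisfy, for ℓ ∈ {k, k+1}, σQυ^ℓ + Mυ^ℓ + (σ/γ)·M·r(υ^{ℓ−1}) = Mn^ℓ. Set δ^ℓ := υ^ℓ − υ^{ℓ−1}. Then σ·(δ^{k+1})ᵀQδ^{k+1} + (1 − (σ/γ)(1 − n*))·Σ_i m_i(δ^{k+1}_i)² + (σ(1 − n*)/(2γ))·(Σ_i m_i(δ^{k+1}_i)²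 − Σ_i m_i(δ^k_i)²) ≤ Σ_i m_i (n^{k+1}_i − n^k_i)·δ^{k+1}_i. -/
theorem stmt14 (N : ℕ) (hN : 1 ≤ N)
    (m : Fin N → ℝ) (hm : ∀ i, 0 < m i)
    (Q : Matrix (Fin N) (Fin N) ℝ) (hQ : Q.PosSemidef)
    (σ γ ns : ℝ) (hσ : 0 < σ) (hγ : 0 < γ) (hns : ns ∈ Set.Ioo (0 : ℝ) 1)
    (hsmall : σ / γ * (1 - ns) ≤ 1)
    (nk nk1 υkm υk υk1 : Fin N → ℝ)
    (heqk : ∀ i, σ * (Q.mulVec υk) i + m i * υk i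
      + σ / γ * (m i * (-(1 - ns) * (υkm i + 1))) = m i * nk i)
    (heqk1 : ∀ i, σ * (Q.mulVec υk1) i + m i * υk1 i
      + σ / γ * (m i * (-(1 - ns) * (υk i + 1))) = m i * nk1 i) :
    σ * dotProduct (fun i => υk1 i - υk i) (Q.mulVec fun i => υk1 i - υk i)
      + (1 - σ / γ * (1 - ns)) * ∑ i, m i * (υk1 i - υk i) ^ 2
      + σ * (1 - ns) / (2 * γ) *
          ((∑ i, m i * (υk1 i - υk i) ^ 2) - ∑ i, m i * (υk i - υkm i) ^ 2)
      ≤ ∑ i, m i * (nk1 i - nk i) * (υk1 i - υk i) := by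
  set δ1 : Fin N → ℝ := fun i => υk1 i - υk i with hδ1
  set δ0 : Fin N → ℝ := fun i => υk i - υkm i with hδ0
  have hmv : ∀ i, (Q.mulVec δ1) i = (Q.mulVec υk1) i - (Q.mulVec υk) i := by
    intro i
    simp [Matrix.mulVec, dotProduct, hδ1, mul_sub, Finset.sum_sub_distrib]
  have key : ∀ i, m i * (nk1 i - nk i) * δ1 i
      = σ * (Q.mulVec δ1) i * δ1 i + m i * δ1 i ^ 2
        - σ / γ * (1 - ns) * (m i * (δ0 i * δ1 i)) := by
    intro i
    have h1 := heqk1 i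
    have h0 := heqk i
    have hm := hmv i
    simp only [hδ1, hδ0] at *
    linear_combination (υk i - υk1 i) * h1 + (υk1 i - υk i) * h0 - σ * (υk1 i - υk i) * hm
  have hsum : ∑ i, m i * (nk1 i - nk i) * δ1 i
      = σ * dotProduct δ1 (Q.mulVec δ1) + (∑ i, m i * δ1 i ^ 2)
        - σ / γ * (1 - ns) * ∑ i, m i * (δ0 i * δ1 i) := by
    rw [dotProduct, Finset.mul_sum, Finset.mul_sum, ← Finset.sum_add_distrib,
      ← Finset.sum_sub_distrib]
    exact Finset.sum_congr rfl fun i _ => by rw [key i]; ring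
  have hexp : ∑ i, m i * (δ1 i - δ0 i) ^ 2
      = (∑ i, m i * δ1 i ^ 2) - 2 * (∑ i, m i * (δ0 i * δ1 i))
        + ∑ i, m i * δ0 i ^ 2 := by
    rw [Finset.mul_sum, ← Finset.sum_sub_distrib, ← Finset.sum_add_distrib]
    exact Finset.sum_congr rfl fun i _ => by ring
  have hsq : (0:ℝ) ≤ ∑ i, m i * (δ1 i - δ0 i) ^ 2 :=
    Finset.sum_nonneg fun i _ => mul_nonneg (hm i).le (sq_nonneg _)
  have hc : 0 ≤ σ / γ * (1 - ns) :=
    mul_nonneg (div_nonneg hσ.le hγ.le) (by linarith [hns.2])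
  have hhalf : σ * (1 - ns) / (2 * γ) = σ / γ * (1 - ns) / 2 := by
    field_simp
  rw [hsum, hhalf]
  rw [hexp] at hsq
  nlinarith [mul_nonneg hc hsq]
end
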